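/- For every n ≥ 2, the Černý automaton C_n is completely reachable: every nonempty subset of its state set {0, 1, …, n−1} equals {0,…,n−1}·w for some word w over {a, b}. -/

import Mathlib

open Finset

/-- The action of a word (list of letters) on a state, applying letters left to right. -/
def act {Q A : Type*} (δ : Q → A → Q) (q : Q) (w : List A) : Q := w.foldl δ q

/-- The image of a set of states under the action of a word. -/
def img {Q A : Type*} [DecidableEq Q] (δ : Q → A → Q) (P : Finset Q) (w : List A) : Finset Q :=
  P.image (fun q => act δ q w)

/-- `excl δ w = Q \ Q·w`. -/
def excl {Q A : Type*} [Fintype Q] [DecidableEq Q] (δ : Q → A → Q) (w : List A) : Finset Q :=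
  Finset.univ \ img δ Finset.univ w

/-- `dupl δ w` : the set of states with at least two preimages under the action of `w`. -/
def dupl {Q A : Type*} [Fintype Q] [DecidableEq Q] (δ : Q → A → Q) (w : List A) : Finset Q :=
  Finset.univ.filter (fun p => ∃ q₁ q₂ : Q, q₁ ≠ q₂ ∧ act δ q₁ w = p ∧ act δ q₂ w = p)

/-- A DFA is completely reachable if every nonempty subset of states is the image of the
full state set under the action of some word. -/
def CompletelyReachable {Q A : Type*} [Fintype Q] [DecidableEq Q] (δ : Q → A → Q) : Prop :=
  ∀ P : Finset Q, P.Nonempty → ∃ w : List A, img δ Finset.univ w = P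

/-- The transition function of the Černý automaton `C_n`: the letter `false` (= a) sends
0 to 1 and fixes the other states; the letter `true` (= b) adds 1 modulo n. -/
def cernyδ (n : ℕ) (hn : 2 ≤ n) (q : Fin n) (x : Bool) : Fin n :=
  if x then ⟨(q.val + 1) % n, Nat.mod_lt _ (by omega)⟩
  else if q.val = 0 then ⟨1, by omega⟩ else q

open Fin.CommRing

lemma img_append {Q A : Type*} [DecidableEq Q] (δ : Q → A → Q) (P : Finset Q) (u v : List A) :
    img δ P (u ++ v) = img δ (img δ P u) v := by
  simp [img, act, List.foldl_append, Finset.image_image, Function.comp_def]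

lemma img_cons {Q A : Type*} [DecidableEq Q] (δ : Q → A → Q) (P : Finset Q) (x : A) (w : List A) :
    img δ P (x :: w) = img δ (P.image (fun q => δ q x)) w := by
  simp [img, act, Finset.image_image, Function.comp_def]

lemma cernyδ_true (n : ℕ) (hn : 2 ≤ n) [NeZero n] (q : Fin n) : cernyδ n hn q true = q + 1 := by
  apply Fin.ext
  have h1 : (1 : Fin n).val = 1 := by
    rw [Fin.val_one']
    exact Nat.mod_eq_of_lt (by omega)
  simp [cernyδ, Fin.add_def, h1]

lemma cernyδ_false (n : ℕ) (hn : 2 ≤ n) [NeZero n] (q : Fin n) :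
    cernyδ n hn q false = if q = 0 then 1 else q := by
  have h1 : (1 : Fin n).val = 1 := by
    rw [Fin.val_one']
    exact Nat.mod_eq_of_lt (by omega)
  rcases eq_or_ne q 0 with h | h
  · subst h
    rw [if_pos rfl]
    apply Fin.ext
    simp [cernyδ, Fin.val_one', Nat.mod_eq_of_lt (show 1 < n by omega)]
  · have hv : q.val ≠ 0 := fun h' => h (Fin.ext (by simp [h']))
    simp [cernyδ, hv, h]

lemma act_replicate (n : ℕ) (hn : 2 ≤ n) [NeZero n] (q : Fin n) (m : ℕ) :
    act (cernyδ n hn) q (List.replicate m true) = q + (m : Fin n) := by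
  induction m generalizing q with
  | zero => simp [act]
  | succ m ih =>
    rw [List.replicate_succ]
    show act (cernyδ n hn) (cernyδ n hn q true) (List.replicate m true) = _
    rw [ih, cernyδ_true]
    push_cast
    ring

lemma exists_boundary (n : ℕ) (hn : 2 ≤ n) [NeZero n] {P : Finset (Fin n)} (hne : P.Nonempty)
    (hP : P ≠ univ) : ∃ s ∈ P, s - 1 ∉ P := by
  obtain ⟨p, hp⟩ := hne
  have : ∃ t, t ∉ P := by
    by_contra h
    push_neg at h
    exact hP (Finset.eq_univ_iff_forall.mpr h)
  obtain ⟨t, ht⟩ := this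
  have hex : ∃ j : ℕ, t + (j : Fin n) ∈ P := by
    refine ⟨(p - t).val, ?_⟩
    rw [Fin.cast_val_eq_self]
    simpa using hp
  set j₀ := Nat.find hex with hj
  have h0 : t + (j₀ : Fin n) ∈ P := Nat.find_spec hex
  have hj0 : j₀ ≠ 0 := by
    intro h
    rw [h] at h0
    simp only [Nat.cast_zero, add_zero] at h0
    exact ht h0
  refine ⟨t + (j₀ : Fin n), h0, ?_⟩
  have hcast : (j₀ : Fin n) = ((j₀ - 1 : ℕ) : Fin n) + 1 := by
    conv_lhs => rw [show j₀ = (j₀ - 1) + 1 by omega]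
    push_cast
    ring
  have heq : t + (j₀ : Fin n) - 1 = t + ((j₀ - 1 : ℕ) : Fin n) := by
    rw [hcast]; ring
  rw [heq]
  exact Nat.find_min hex (by omega)

lemma cerny_key (n : ℕ) (hn : 2 ≤ n) : ∀ k : ℕ, ∀ P : Finset (Fin n), P.Nonempty →
    n ≤ P.card + k → ∃ w : List Bool, img (cernyδ n hn) univ w = P := by
  haveI : NeZero n := ⟨by omega⟩
  intro k
  induction k with
  | zero =>
    intro P hne hcard
    have hcardle : P.card ≤ n := by
      simpa using P.card_le_univ
    have : P = univ := Finset.eq_univ_of_card P (by simp; omega)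
    exact ⟨[], by simp [img, act, this]⟩
  | succ k ih =>
    intro P hne hcard
    by_cases hPu : P = univ
    · exact ⟨[], by simp [img, act, hPu]⟩
    · obtain ⟨s, hs, hs1⟩ := exists_boundary n hn hne hPu
      set r : Fin n := 1 - s with hr
      have hsr : s + r = 1 := by rw [hr]; ring
      set S : Finset (Fin n) := P.image (fun q => q + r) with hS
      have hS1 : (1 : Fin n) ∈ S := Finset.mem_image.mpr ⟨s, hs, hsr⟩
      have hS0 : (0 : Fin n) ∉ S := by
        intro h
        obtain ⟨q, hq, he⟩ := Finset.mem_image.mp h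
        have : q = s - 1 := by linear_combination he - hsr
        rw [this] at hq
        exact hs1 hq
      have hcardS : S.card = P.card := Finset.card_image_of_injective _ (add_left_injective r)
      set S' := insert (0 : Fin n) S with hS'
      have hcardS' : S'.card = P.card + 1 := by
        rw [hS', Finset.card_insert_of_notMem hS0, hcardS]
      obtain ⟨w, hw⟩ := ih S' ⟨0, Finset.mem_insert_self _ _⟩ (by omega)
      set m := n - r.val with hm
      have hmr : ((m : ℕ) : Fin n) = -r := by
        apply eq_neg_of_add_eq_zero_left
        have hcst : ((m : ℕ) : Fin n) + ((r.val : ℕ) : Fin n) = ((m + r.val : ℕ) : Fin n) := by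
          push_cast; ring
        rw [← Fin.cast_val_eq_self r, hcst,
          show m + r.val = n by have := r.isLt; omega, Fin.natCast_self]
      refine ⟨w ++ false :: List.replicate m true, ?_⟩
      rw [img_append, hw, img_cons]
      have hSa : S'.image (fun q => cernyδ n hn q false) = S := by
        rw [hS', Finset.image_insert, cernyδ_false n hn 0, if_pos rfl]
        have : S.image (fun q => cernyδ n hn q false) = S := by
          rw [Finset.image_congr (g := id), Finset.image_id]
          intro q hq
          simp only [id]
          rw [cernyδ_false, if_neg]
          intro h
          rw [h] at hq
          exact hS0 hq
        rw [this, Finset.insert_eq_self.mpr hS1]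
      rw [hSa]
      have : img (cernyδ n hn) S (List.replicate m true) = S.image (fun q => q + -r) := by
        unfold img
        apply Finset.image_congr
        intro q _
        dsimp only
        rw [act_replicate n hn q m, hmr]
      rw [this, hS, Finset.image_image]
      have : P.image ((fun q => q + -r) ∘ fun q => q + r) = P.image id := by
        apply Finset.image_congr
        intro q _
        simp
      rw [this, Finset.image_id]

/-- For every n ≥ 2, the Černý automaton C_n is completely reachable. -/
theorem cerny_completelyReachable (n : ℕ) (hn : 2 ≤ n) :
    CompletelyReachable (cernyδ n hn) := by
  intro P hne
  exact cerny_key n hn n P hne (by omega)
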